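/- arXiv:1404.5174 — 6 statements merged into one kernel-verified Lean document; each statement's English description precedes it below -/
import Mathlib

section
/- Let (g,B) be a quadratic Lie algebra, let s be a Levi subalgebra of g, let r be the solvable radical of g, and suppose g is B-irreducible, non solvable and not simple. Then the orthogonal complement r^perp of r (with respect to B) is contained in the center of r. -/
/-- Let `(g,B)` be a non-solvable, non-simple, `B`-irreducible quadratic Lie algebra
with Levi decomposition `g = s ⊕ r` (`s` a semisimple subalgebra complementing the
solvable radical `r`).  Then `r^⊥ ⊆ z(r)`: every element of the orthogonal of the
radical lies in the radical and commutes with it. -/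
theorem radical_orthogonal_subset_center_radical
    (K : Type*) [Field K] [CharZero K]
    (L : Type*) [LieRing L] [LieAlgebra K L] [Module.Finite K L]
    (B : LinearMap.BilinForm K L)
    (hB : B.Nondegenerate)
    (hsymm : ∀ x y : L, B x y = B y x)
    (hinv : ∀ x y z : L, B ⁅x, y⁆ z = B x ⁅y, z⁆)
    (s : LieSubalgebra K L)
    (hs : LieAlgebra.IsSemisimple K s)
    (hLevi : IsCompl s.toSubmodule
      (LieSubmodule.toSubmodule (LieAlgebra.radical K L)))
    (hnonsolv : ¬ LieAlgebra.IsSolvable L)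
    (hnonsimple : ¬ LieAlgebra.IsSimple K L)
    (hirr : ∀ J : LieIdeal K L,
      (∀ x ∈ J, (∀ y ∈ J, B x y = 0) → x = 0) → J = ⊥ ∨ J = ⊤) :
    ∀ x ∈ B.orthogonal (LieSubmodule.toSubmodule (LieAlgebra.radical K L)),
      x ∈ LieAlgebra.radical K L ∧ ∀ y ∈ LieAlgebra.radical K L, ⁅x, y⁆ = 0 := by
  classical
  set r : LieIdeal K L := LieAlgebra.radical K L with hr
  set rsub : Submodule K L := LieSubmodule.toSubmodule r with hrsub
  set Isub : Submodule K L := B.orthogonal rsub with hIsub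
  -- the orthogonal of any ideal is stable under brackets
  have horth : ∀ (N : LieIdeal K L) (x m : L),
      m ∈ B.orthogonal (LieSubmodule.toSubmodule N) → ⁅x, m⁆ ∈
        B.orthogonal (LieSubmodule.toSubmodule N) := by
    intro N x m hm
    rw [LinearMap.BilinForm.mem_orthogonal_iff] at hm ⊢
    intro n hn
    have hnx : ⁅n, x⁆ ∈ N := by
      have := N.lie_mem (x := x) hn
      have h2 : ⁅n, x⁆ = -⁅x, n⁆ := by rw [← lie_skew]
      rw [h2]; exact N.neg_mem this
    have : B ⁅n, x⁆ m = B n ⁅x, m⁆ := hinv n x m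
    show B n ⁅x, m⁆ = 0
    rw [← this]
    exact hm _ hnx
  -- Fact A : elements of r^⊥ commute with r
  have factA : ∀ a ∈ Isub, ∀ y ∈ r, ⁅a, y⁆ = 0 := by
    intro a ha y hy
    apply hB.1
    intro z
    rw [hinv]
    have hyz : ⁅y, z⁆ ∈ r := by
      have := r.lie_mem (x := z) hy
      have h2 : ⁅y, z⁆ = -⁅z, y⁆ := by rw [← lie_skew]
      rw [h2]; exact r.neg_mem this
    rw [hsymm]
    exact ha _ hyz
  -- any element of an ideal N orthogonal to all of N lies in the radical
  have hkey : ∀ (N : LieIdeal K L), ∀ y ∈ N, (∀ n ∈ N, B n y = 0) → y ∈ r := by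
    intro N y hyN hyperp
    set V : LieIdeal K L :=
      { toSubmodule := (LieSubmodule.toSubmodule N) ⊓
          B.orthogonal (LieSubmodule.toSubmodule N)
        lie_mem := by
          intro x m hm
          rcases hm with ⟨hm1, hm2⟩
          exact ⟨N.lie_mem hm1, horth N x m hm2⟩ } with hV
    have hmemV : ∀ z : L, z ∈ V ↔ z ∈ (LieSubmodule.toSubmodule N) ⊓
        B.orthogonal (LieSubmodule.toSubmodule N) := fun z => Iff.rfl
    have habel : IsLieAbelian V := by
      constructor
      intro a b
      have hab : (↑(⁅a, b⁆ : V) : L) = ⁅(↑a : L), (↑b : L)⁆ := rfl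
      have : (↑(⁅a, b⁆ : V) : L) = 0 := by
        rw [hab]
        apply hB.1
        intro z
        rw [hinv]
        have hbz : ⁅(↑b : L), z⁆ ∈ B.orthogonal (LieSubmodule.toSubmodule N) := by
          have hb2 : (↑b : L) ∈ B.orthogonal (LieSubmodule.toSubmodule N) :=
            ((hmemV _).mp b.2).2
          have h3 := horth N z _ hb2
          have h2 : ⁅(↑b : L), z⁆ = -⁅z, (↑b : L)⁆ := by rw [← lie_skew]
          rw [h2]; exact Submodule.neg_mem _ h3
        have ha2 : (↑a : L) ∈ N := ((hmemV _).mp a.2).1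
        exact hbz _ ha2
      exact Subtype.ext this
    have hsolv : LieAlgebra.IsSolvable V := LieAlgebra.ofAbelianIsSolvable V
    have hle : V ≤ r := (LieAlgebra.LieIdeal.solvable_iff_le_radical K L V).mp hsolv
    exact hle ⟨hyN, fun n hn => hyperp n hn⟩
  -- main proof
  intro x hx
  refine ⟨?_, factA x hx⟩
  by_cases hrad : r = ⊥
  · -- radical trivial : g is simple, contradiction
    exfalso
    apply hnonsimple
    constructor
    · intro A
      apply hirr
      intro y hyA hyperp
      have : y ∈ r := hkey A y hyA (fun n hn => by rw [hsymm]; exact hyperp n hn)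
      rw [hrad] at this
      simpa using this
    · intro habelL
      exact hnonsolv (LieAlgebra.ofAbelianIsSolvable L)
  · -- main case
    haveI := hs
    -- the ideal of s consisting of elements lying in I + r
    set A : Submodule K L := Isub ⊔ rsub with hA
    have hAstab : ∀ (z m : L), m ∈ A → ⁅z, m⁆ ∈ A := by
      intro z m hm
      rcases Submodule.mem_sup.mp hm with ⟨i, hi, u, hu, rfl⟩
      rw [lie_add]
      apply Submodule.add_mem
      · exact Submodule.mem_sup_left (horth r z i hi)
      · exact Submodule.mem_sup_right (r.lie_mem hu)
    set i_s : LieIdeal K s :=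
      { toSubmodule := Submodule.comap s.toSubmodule.subtype A
        lie_mem := by
          intro b a ha
          show ((⁅b, a⁆ : s) : L) ∈ A
          have : ((⁅b, a⁆ : s) : L) = ⁅(b : L), (a : L)⁆ := rfl
          rw [this]
          exact hAstab _ _ ha } with hi_s
    set t_s : LieIdeal K s := i_sᶜ with ht_s
    have hcompl : IsCompl i_s t_s := isCompl_compl
    -- the ideal T of L
    set Tsub : Submodule K L :=
      (Submodule.map s.toSubmodule.subtype (LieSubmodule.toSubmodule t_s)) ⊔ rsub with hTsub
    have hdecomp : ∀ z : L, ∃ a ∈ s.toSubmodule, ∃ u ∈ rsub, z = a + u := by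
      intro z
      have : z ∈ s.toSubmodule ⊔ rsub := by
        rw [hLevi.sup_eq_top]; trivial
      rcases Submodule.mem_sup.mp this with ⟨a, ha, u, hu, h⟩
      exact ⟨a, ha, u, hu, h.symm⟩
    have hTstab : ∀ (z m : L), m ∈ Tsub → ⁅z, m⁆ ∈ Tsub := by
      intro z m hm
      rcases Submodule.mem_sup.mp hm with ⟨qq, hq, u, hu, rfl⟩
      rcases Submodule.mem_map.mp hq with ⟨q', hq', rfl⟩
      rcases hdecomp z with ⟨a, has, w, hw, rfl⟩
      show ⁅a + w, (q' : L) + u⁆ ∈ Tsub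
      have m1 : ⁅a, (q' : L)⁆ ∈ Tsub := by
        apply Submodule.mem_sup_left
        exact Submodule.mem_map.mpr ⟨⁅(⟨a, has⟩ : s), q'⁆, t_s.lie_mem hq', rfl⟩
      have m2 : ⁅a, u⁆ ∈ Tsub := Submodule.mem_sup_right (r.lie_mem hu)
      have m3 : ⁅w, (q' : L)⁆ ∈ Tsub := by
        apply Submodule.mem_sup_right
        have h3 := r.lie_mem (x := (q' : L)) hw
        have h2 : ⁅w, (q' : L)⁆ = -⁅(q' : L), w⁆ := by rw [← lie_skew]
        rw [h2]; exact Submodule.neg_mem _ h3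
      have m4 : ⁅w, u⁆ ∈ Tsub := Submodule.mem_sup_right (r.lie_mem hu)
      have hexp : ⁅a + w, (q' : L) + u⁆ =
          ⁅a, (q' : L)⁆ + ⁅a, u⁆ + (⁅w, (q' : L)⁆ + ⁅w, u⁆) := by
        rw [add_lie, lie_add, lie_add]
      rw [hexp]
      exact Submodule.add_mem _ (Submodule.add_mem _ m1 m2) (Submodule.add_mem _ m3 m4)
    set T : LieIdeal K L := { toSubmodule := Tsub, lie_mem := fun {z m} hm => hTstab z m hm }
      with hT
    have hmemT : ∀ z : L, z ∈ T ↔ z ∈ Tsub := fun z => Iff.rfl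
    have hrT : ∀ u ∈ r, u ∈ T := by
      intro u hu
      exact (hmemT u).mpr (Submodule.mem_sup_right hu)
    -- g = I + T
    have htotal : ∀ z : L, ∃ i ∈ Isub, ∃ t ∈ Tsub, z = i + t := by
      intro z
      rcases hdecomp z with ⟨a, has, u, hu, rfl⟩
      have hatop : (⟨a, has⟩ : s) ∈ i_s ⊔ t_s := by
        rw [hcompl.sup_eq_top]; trivial
      rcases (LieSubmodule.mem_sup _ _ _).mp hatop with ⟨p, hp, q, hq, hpq⟩
      have hpA : ((p : L)) ∈ A := hp
      rcases Submodule.mem_sup.mp hpA with ⟨i, hi, w, hw, hiw⟩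
      refine ⟨i, hi, w + (q : L) + u, ?_, ?_⟩
      · exact Submodule.add_mem _ (Submodule.add_mem _ (Submodule.mem_sup_right hw)
          (Submodule.mem_sup_left (Submodule.mem_map.mpr ⟨q, hq, rfl⟩)))
          (Submodule.mem_sup_right hu)
      · have hcoe : a = (p : L) + (q : L) := by
          have h := congrArg (fun t : s => (t : L)) hpq
          simpa using h.symm
        rw [hcoe, ← hiw]; abel
    -- B is nondegenerate on T
    have hTcases := hirr T (by
      intro y hyT hyperp
      have hyr : y ∈ r := hkey T y hyT (fun n hn => by rw [hsymm]; exact hyperp n hn)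
      apply hB.1
      intro z
      rcases htotal z with ⟨i, hi, t, ht, rfl⟩
      rw [map_add]
      have h1 : B y i = 0 := hi y hyr
      have h2 : B y t = 0 := hyperp t ((hmemT t).mpr ht)
      rw [h1, h2, add_zero])
    rcases hTcases with hTbot | hTtop
    · exfalso
      apply hrad
      rw [eq_bot_iff]
      intro u hu
      have : u ∈ T := hrT u hu
      rw [hTbot] at this
      simpa using this
    · -- T = ⊤ implies I ⊆ r
      rcases hdecomp x with ⟨a, has, u, hu, hxau⟩
      have haA : a ∈ A := by
        have : a = x + (-u) := by rw [hxau]; abel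
        rw [this]
        exact Submodule.add_mem _ (Submodule.mem_sup_left hx)
          (Submodule.mem_sup_right (Submodule.neg_mem _ hu))
      have haT : a ∈ Tsub := by
        have : a ∈ T := by rw [hTtop]; trivial
        exact (hmemT a).mp this
      rcases Submodule.mem_sup.mp haT with ⟨qc, hqc, w, hw, haqw⟩
      rcases Submodule.mem_map.mp hqc with ⟨q, hq, rfl⟩
      have haqw' : (q : L) + w = a := haqw
      have hws : w ∈ s.toSubmodule := by
        have hw2 : w = a + (-(q : L)) := by rw [← haqw']; abel
        rw [hw2]
        exact Submodule.add_mem _ has (Submodule.neg_mem _ q.2)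
      have hw0 : w = 0 := by
        have := hLevi.disjoint
        rw [Submodule.disjoint_def] at this
        exact this w hws hw
      have haq : a = (q : L) := by rw [← haqw', hw0, add_zero]
      have hqis : q ∈ i_s := by
        have : ((q : L)) ∈ A := by rw [← haq]; exact haA
        exact this
      have hq0 : q = 0 := by
        have hbot : q ∈ i_s ⊓ t_s := ⟨hqis, hq⟩
        rw [hcompl.inf_eq_bot] at hbot
        simpa using hbot
      have ha0 : a = 0 := by
        rw [haq, hq0]; rfl
      rw [hxau, ha0, zero_add]
      exact hu
end

section
/- Let (g,B) be a non solvable, non simple, B-irreducible quadratic Lie algebra with Levi decomposition g = s ⊕ r, and suppose the Levi subalgebra s is simple. Then either r = r^perp or r^perp ⊆ [r,r]. -/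
open LinearMap.BilinForm

attribute [local instance 100] LieRing.ofAssociativeRing

section Helpers

variable {K : Type*} [Field K] {L : Type*} [LieRing L] [LieAlgebra K L]

lemma QB.mem_orth {B : LinearMap.BilinForm K L} {N : Submodule K L} {x : L} :
    x ∈ B.orthogonal N ↔ ∀ y ∈ N, B y x = 0 := Iff.rfl

variable (B : LinearMap.BilinForm K L)

lemma QB.orth_sup (p q : Submodule K L) :
    B.orthogonal (p ⊔ q) = B.orthogonal p ⊓ B.orthogonal q := by
  ext x
  simp only [QB.mem_orth, Submodule.mem_inf]
  constructor
  · exact fun h => ⟨fun y hy => h y (Submodule.mem_sup_left hy),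
      fun y hy => h y (Submodule.mem_sup_right hy)⟩
  · rintro ⟨h1, h2⟩ y hy
    rcases Submodule.mem_sup.mp hy with ⟨a, ha, b, hb, rfl⟩
    rw [map_add, LinearMap.add_apply, h1 a ha, h2 b hb, add_zero]

lemma QB.lieClosed_orth (hinv : ∀ x y z : L, B ⁅x, y⁆ z = B x ⁅y, z⁆)
    {p : Submodule K L} (hp : ∀ z x : L, x ∈ p → ⁅z, x⁆ ∈ p) :
    ∀ z x : L, x ∈ B.orthogonal p → ⁅z, x⁆ ∈ B.orthogonal p := by
  intro z x hx
  rw [QB.mem_orth]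
  intro y hy
  have h1 : B ⁅y, z⁆ x = B y ⁅z, x⁆ := hinv y z x
  rw [← h1]
  have h2 : (⁅y, z⁆ : L) = -⁅z, y⁆ := (lie_skew y z).symm
  have hmem : (⁅y, z⁆ : L) ∈ p := by
    rw [h2]; exact p.neg_mem (hp z y hy)
  exact (QB.mem_orth.mp hx) _ hmem

lemma QB.lieClosed_sup {p q : Submodule K L}
    (hp : ∀ z x : L, x ∈ p → ⁅z, x⁆ ∈ p) (hq : ∀ z x : L, x ∈ q → ⁅z, x⁆ ∈ q) :
    ∀ z x : L, x ∈ p ⊔ q → ⁅z, x⁆ ∈ p ⊔ q := by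
  intro z x hx
  rcases Submodule.mem_sup.mp hx with ⟨a, ha, b, hb, rfl⟩
  rw [lie_add]
  exact Submodule.add_mem _ (Submodule.mem_sup_left (hp z a ha))
    (Submodule.mem_sup_right (hq z b hb))

/-- Any lie-closed submodule lying above the "radical part" of a Levi decomposition with simple
Levi factor is either below it or everything. -/
lemma QB.ideal_above (s : LieSubalgebra K L) (hs : LieAlgebra.IsSimple K s)
    {R : Submodule K L} (hd : s.toSubmodule ⊓ R = ⊥) (hc : s.toSubmodule ⊔ R = ⊤)
    {p : Submodule K L} (hp : ∀ z x : L, x ∈ p → ⁅z, x⁆ ∈ p) (hRp : R ≤ p) :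
    p ≤ R ∨ p = ⊤ := by
  let pI : Submodule K ↥s :=
    { carrier := {a | (a : L) ∈ p}
      add_mem' := fun {a b} ha hb => by
        show ((a + b : ↥s) : L) ∈ p
        simpa using p.add_mem ha hb
      zero_mem' := by
        show ((0 : ↥s) : L) ∈ p
        simpa using p.zero_mem
      smul_mem' := fun c a ha => by
        show ((c • a : ↥s) : L) ∈ p
        simpa using p.smul_mem c ha }
  let I : LieIdeal K ↥s :=
    { pI with
      lie_mem := fun {b a} ha => by
        show ((⁅b, a⁆ : ↥s) : L) ∈ p
        rw [LieSubalgebra.coe_bracket]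
        exact hp _ _ ha }
  rcases hs.eq_bot_or_eq_top I with hI | hI
  · left
    intro x hx
    have hxT : x ∈ s.toSubmodule ⊔ R := hc ▸ Submodule.mem_top
    rcases Submodule.mem_sup.mp hxT with ⟨a, ha, b, hb, rfl⟩
    have hap : a ∈ p := by
      have h0 : a + b - b ∈ p := p.sub_mem hx (hRp hb)
      simpa using h0
    have hmem : (⟨a, ha⟩ : ↥s) ∈ I := hap
    rw [hI] at hmem
    have ha0 : a = (0 : L) := by
      have := (LieSubmodule.mem_bot (R := K) (L := ↥s) _).mp hmem
      exact congrArg Subtype.val this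
    rw [ha0, zero_add]
    exact hb
  · right
    rw [eq_top_iff]
    intro x _
    have hxT : x ∈ s.toSubmodule ⊔ R := hc ▸ Submodule.mem_top
    rcases Submodule.mem_sup.mp hxT with ⟨a, ha, b, hb, rfl⟩
    have hmem : (⟨a, ha⟩ : ↥s) ∈ I := by rw [hI]; trivial
    exact p.add_mem hmem (hRp hb)

lemma QB.simple_of_top (s : LieSubalgebra K L) (hs : LieAlgebra.IsSimple K s)
    (htop : s.toSubmodule = ⊤) : LieAlgebra.IsSimple K L := by
  have hsurj : ∀ x : L, ∃ a : ↥s, (a : L) = x := by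
    intro x
    have : x ∈ s.toSubmodule := htop ▸ Submodule.mem_top
    exact ⟨⟨x, this⟩, rfl⟩
  constructor
  · intro J
    let pI : Submodule K ↥s :=
      { carrier := {a | (a : L) ∈ J}
        add_mem' := fun {a b} ha hb => by
          show ((a + b : ↥s) : L) ∈ J
          simpa using J.add_mem ha hb
        zero_mem' := by
          show ((0 : ↥s) : L) ∈ J
          simpa using J.zero_mem
        smul_mem' := fun c a ha => by
          show ((c • a : ↥s) : L) ∈ J
          simpa using J.smul_mem c ha }
    let I : LieIdeal K ↥s :=
      { pI with
        lie_mem := fun {b a} ha => by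
          show ((⁅b, a⁆ : ↥s) : L) ∈ J
          rw [LieSubalgebra.coe_bracket]
          exact J.lie_mem ha }
    rcases hs.eq_bot_or_eq_top I with hI | hI
    · left
      rw [LieSubmodule.eq_bot_iff]
      intro m hm
      obtain ⟨a, rfl⟩ := hsurj m
      have hmem : a ∈ I := hm
      rw [hI] at hmem
      have := (LieSubmodule.mem_bot (R := K) (L := ↥s) _).mp hmem
      simpa using congrArg Subtype.val this
    · right
      rw [eq_top_iff]
      intro m _
      obtain ⟨a, rfl⟩ := hsurj m
      have hmem : a ∈ I := by rw [hI]; trivial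
      exact hmem
  · intro habel
    refine hs.non_abelian ⟨fun a b => ?_⟩
    refine Subtype.ext ?_
    rw [LieSubalgebra.coe_bracket]
    have : (⁅(a : L), (b : L)⁆ : L) = 0 := trivial_lie_zero _ _ _ _
    simpa using this

lemma QB.exists_lieHom (N : Submodule K L) (pn : L →ₗ[K] ↥N)
    (hfix : ∀ (x y : L) (u : ↥N),
      pn ⁅x, ⁅y, (u : L)⁆⁆ = pn ⁅x, ((pn ⁅y, (u : L)⁆ : ↥N) : L)⁆) :
    ∃ Θ : L →ₗ⁅K⁆ Module.End K ↥N, ∀ (x : L) (u : ↥N), Θ x u = pn ⁅x, (u : L)⁆ := by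
  refine ⟨{ toFun := fun x => pn ∘ₗ (LieAlgebra.ad K L x) ∘ₗ N.subtype
            map_add' := ?_
            map_smul' := ?_
            map_lie' := ?_ }, fun x u => rfl⟩
  · intro x y
    ext u
    simp [LinearMap.comp_apply, LieAlgebra.ad_apply, add_lie]
  · intro c x
    ext u
    simp [LinearMap.comp_apply, LieAlgebra.ad_apply, smul_lie]
  · intro x y
    ext u
    simp only [LinearMap.comp_apply, LieAlgebra.ad_apply, Ring.lie_def,
      LinearMap.sub_apply, Module.End.mul_apply, Submodule.coe_subtype]
    rw [lie_lie, map_sub, ← hfix x y u, ← hfix y x u]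

end Helpers

/-- Let `(g,B)` be a non-solvable, non-simple, `B`-irreducible quadratic Lie algebra with
Levi decomposition `g = s ⊕ r`, where the Levi subalgebra `s` is simple.  Then either
`r = r^⊥` or `r^⊥ ⊆ [r,r]`. -/
theorem radical_eq_orth_or_orth_le_derived
    (K : Type*) [Field K] [CharZero K]
    (L : Type*) [LieRing L] [LieAlgebra K L] [Module.Finite K L]
    (B : LinearMap.BilinForm K L)
    (hB : B.Nondegenerate)
    (hsymm : ∀ x y : L, B x y = B y x)
    (hinv : ∀ x y z : L, B ⁅x, y⁆ z = B x ⁅y, z⁆)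
    (s : LieSubalgebra K L)
    (hs : LieAlgebra.IsSimple K s)
    (hLevi : IsCompl s.toSubmodule
      (LieSubmodule.toSubmodule (LieAlgebra.radical K L)))
    (hnonsolv : ¬ LieAlgebra.IsSolvable L)
    (hnonsimple : ¬ LieAlgebra.IsSimple K L)
    (hirr : ∀ J : LieIdeal K L,
      (∀ x ∈ J, (∀ y ∈ J, B x y = 0) → x = 0) → J = ⊥ ∨ J = ⊤) :
    LieSubmodule.toSubmodule (LieAlgebra.radical K L)
        = B.orthogonal (LieSubmodule.toSubmodule (LieAlgebra.radical K L)) ∨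
      B.orthogonal (LieSubmodule.toSubmodule (LieAlgebra.radical K L))
        ≤ LieSubmodule.toSubmodule ⁅LieAlgebra.radical K L, LieAlgebra.radical K L⁆ := by
  classical
  by_cases hcase : B.orthogonal (LieSubmodule.toSubmodule (LieAlgebra.radical K L))
      ≤ LieSubmodule.toSubmodule ⁅LieAlgebra.radical K L, LieAlgebra.radical K L⁆
  · exact Or.inr hcase
  left
  have hrefl : B.IsRefl := fun x y h => by rw [hsymm]; exact h
  set R : Submodule K L := LieSubmodule.toSubmodule (LieAlgebra.radical K L) with hRdef
  set DD : Submodule K L :=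
    LieSubmodule.toSubmodule ⁅LieAlgebra.radical K L, LieAlgebra.radical K L⁆ with hDDdef
  set S : Submodule K L := s.toSubmodule with hSdef
  set W : Submodule K L := B.orthogonal R with hWdef
  -- basic facts
  have hd : S ⊓ R = ⊥ := disjoint_iff.mp hLevi.disjoint
  have hc : S ⊔ R = ⊤ := codisjoint_iff.mp hLevi.codisjoint
  have hRlie : ∀ z x : L, x ∈ R → ⁅z, x⁆ ∈ R :=
    fun z x hx => (LieAlgebra.radical K L).lie_mem hx
  have hDDlie : ∀ z x : L, x ∈ DD → ⁅z, x⁆ ∈ DD :=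
    fun z x hx => LieSubmodule.lie_mem _ hx
  have hWlie : ∀ z x : L, x ∈ W → ⁅z, x⁆ ∈ W := QB.lieClosed_orth B hinv hRlie
  have hDDR : DD ≤ R := by
    exact (LieSubmodule.toSubmodule_le_toSubmodule _ _).mpr
      (LieSubmodule.lie_le_right _ _)
  have hradTop : (LieAlgebra.radical K L) ≠ ⊤ := by
    intro h
    apply hnonsolv
    have hsolv : LieAlgebra.IsSolvable ↥(LieAlgebra.radical K L) := inferInstance
    rw [h] at hsolv
    exact (LieAlgebra.solvable_iff_equiv_solvable LieIdeal.topEquiv).mp hsolv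
  have hRneTop : R ≠ ⊤ := fun h => hradTop ((LieSubmodule.toSubmodule_eq_top _).mp h)
  -- irreducibility at the submodule level
  have hirr' : ∀ (p : Submodule K L), (∀ z x : L, x ∈ p → ⁅z, x⁆ ∈ p) →
      (p ⊓ B.orthogonal p = ⊥) → p = ⊥ ∨ p = ⊤ := by
    intro p hp hnd
    let J : LieIdeal K L := { toSubmodule := p, lie_mem := fun {x m} hm => hp x m hm }
    have hJnd : ∀ x ∈ J, (∀ y ∈ J, B x y = 0) → x = 0 := by
      intro x hx hyp
      have hxo : x ∈ B.orthogonal p := by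
        rw [QB.mem_orth]
        intro y hy
        rw [hsymm]; exact hyp y hy
      have hxm : x ∈ p ⊓ B.orthogonal p := ⟨hx, hxo⟩
      rw [hnd] at hxm
      exact (Submodule.mem_bot K).mp hxm
    rcases hirr J hJnd with hJ | hJ
    · left
      have h0 := congrArg LieSubmodule.toSubmodule hJ
      rwa [LieSubmodule.bot_toSubmodule] at h0
    · right
      have h0 := congrArg LieSubmodule.toSubmodule hJ
      rwa [LieSubmodule.top_toSubmodule] at h0
  -- Step A : W ≤ R
  have hWR : W ≤ R := by
    by_contra hWR
    rcases QB.ideal_above s hs hd hc (QB.lieClosed_sup hWlie hRlie) le_sup_right with hle | htop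
    · exact hWR (le_trans le_sup_left hle)
    · have h1 : B.orthogonal (W ⊔ R) = ⊥ := by
        rw [htop]; exact orthogonal_top_eq_bot hB
      rw [QB.orth_sup] at h1
      have hWW : B.orthogonal W = R := by
        rw [hWdef]; exact orthogonal_orthogonal hB hrefl R
      rw [hWW] at h1
      rcases hirr' R hRlie h1 with h | h
      · have hS : S = ⊤ := by rw [h, sup_bot_eq] at hc; exact hc
        exact hnonsimple (QB.simple_of_top s hs hS)
      · exact hRneTop h
  -- Step B : DD ⊓ W = ⊥
  have hQlie : ∀ z x : L, x ∈ B.orthogonal DD → ⁅z, x⁆ ∈ B.orthogonal DD :=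
    QB.lieClosed_orth B hinv hDDlie
  have hDDW : DD ⊓ W = ⊥ := by
    have hQR : ¬ (B.orthogonal DD ≤ R) := by
      intro h
      apply hcase
      have h2 : B.orthogonal R ≤ B.orthogonal (B.orthogonal DD) := orthogonal_le h
      rwa [orthogonal_orthogonal hB hrefl] at h2
    rcases QB.ideal_above s hs hd hc (QB.lieClosed_sup hQlie hRlie) le_sup_right with hle | htop
    · exact absurd (le_trans le_sup_left hle) hQR
    · have h1 : B.orthogonal (B.orthogonal DD ⊔ R) = ⊥ := by
        rw [htop]; exact orthogonal_top_eq_bot hB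
      rw [QB.orth_sup, orthogonal_orthogonal hB hrefl] at h1
      exact h1
  -- Step C : brackets between W and R vanish
  have hstep1 : ∀ x ∈ W, ∀ y ∈ R, ⁅x, y⁆ = (0 : L) := by
    intro x hx y hy
    refine hB.1 _ fun z => ?_
    rw [hinv]
    have hyz : (⁅y, z⁆ : L) ∈ R := by
      have h1 : (⁅z, y⁆ : L) ∈ R := hRlie z y hy
      have h2 : (⁅y, z⁆ : L) = -⁅z, y⁆ := (lie_skew y z).symm
      rw [h2]; exact R.neg_mem h1
    rw [hsymm]
    exact (QB.mem_orth.mp hx) _ hyz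
  -- the subspace N
  set N : Submodule K L := B.orthogonal S ⊓ R with hNdef
  have hNR : N ≤ R := inf_le_right
  have hNS : ∀ x ∈ N, ∀ a ∈ S, B a x = 0 := fun x hx a ha => (QB.mem_orth.mp hx.1) a ha
  have hWR' : ∀ x ∈ R, ∀ w ∈ W, B x w = 0 := fun x hx w hw => (QB.mem_orth.mp hw) x hx
  have hOSW : B.orthogonal S ⊓ W = ⊥ := by
    rw [Submodule.eq_bot_iff]
    rintro x ⟨hx1, hx2⟩
    refine hB.1 _ fun z => ?_
    have hz : z ∈ S ⊔ R := hc ▸ Submodule.mem_top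
    rcases Submodule.mem_sup.mp hz with ⟨a, ha, b, hb, rfl⟩
    have h1 : B a x = 0 := (QB.mem_orth.mp hx1) a ha
    have h2 : B b x = 0 := (QB.mem_orth.mp hx2) b hb
    calc B x (a + b) = B x a + B x b := map_add _ _ _
    _ = B a x + B b x := by rw [hsymm x a, hsymm x b]
    _ = 0 := by rw [h1, h2, add_zero]
  have hNW : N ⊓ W = ⊥ := by
    have h0 : N ⊓ W ≤ B.orthogonal S ⊓ W := inf_le_inf_right W inf_le_left
    rw [hOSW] at h0
    exact le_bot_iff.mp h0
  have haux1 : (S ⊔ W) ⊓ R ≤ W := by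
    rintro x ⟨hx1, hx2⟩
    rcases Submodule.mem_sup.mp hx1 with ⟨a, ha, w, hw, rfl⟩
    have haR : a ∈ R := by
      have h0 : a + w - w ∈ R := R.sub_mem hx2 (hWR hw)
      simpa using h0
    have hmem : a ∈ S ⊓ R := ⟨ha, haR⟩
    rw [hd] at hmem
    have ha0 : a = 0 := (Submodule.mem_bot K).mp hmem
    rw [ha0, zero_add]
    exact hw
  have hNorth : B.orthogonal N = S ⊔ W := by
    have h0 : N = B.orthogonal (S ⊔ W) := by
      rw [QB.orth_sup, hNdef]
      congr 1
      rw [hWdef]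
      exact (orthogonal_orthogonal hB hrefl R).symm
    rw [h0, orthogonal_orthogonal hB hrefl]
  have hWorth : B.orthogonal W = R := by
    rw [hWdef]; exact orthogonal_orthogonal hB hrefl R
  have hRNW : R ≤ N ⊔ W := by
    have h1 : B.orthogonal (N ⊔ W) ≤ W := by
      rw [QB.orth_sup, hNorth, hWorth]
      exact haux1
    have h2 := orthogonal_le (B := B) h1
    rw [orthogonal_orthogonal hB hrefl (N ⊔ W)] at h2
    rw [← hWorth]
    exact h2
  have hNnondeg : ∀ x ∈ N, (∀ y ∈ N, B y x = 0) → x = 0 := by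
    intro x hxN hyp
    refine hB.1 _ fun z => ?_
    have hz : z ∈ S ⊔ R := hc ▸ Submodule.mem_top
    rcases Submodule.mem_sup.mp hz with ⟨a, ha, b, hb, rfl⟩
    rcases Submodule.mem_sup.mp (hRNW hb) with ⟨u, hu, w, hw, rfl⟩
    have h1 : B a x = 0 := hNS x hxN a ha
    have h2 : B u x = 0 := hyp u hu
    have h3 : B w x = 0 := by rw [hsymm]; exact hWR' x (hNR hxN) w hw
    calc B x (a + (u + w)) = B x a + (B x u + B x w) := by rw [map_add, map_add]
    _ = B a x + (B u x + B w x) := by rw [hsymm x a, hsymm x u, hsymm x w]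
    _ = 0 := by rw [h1, h2, h3, add_zero, add_zero]
  have hcompl : IsCompl N (S ⊔ W) := by
    constructor
    · rw [disjoint_iff, Submodule.eq_bot_iff]
      rintro x ⟨hxN, hxSW⟩
      have hxW : x ∈ W := haux1 ⟨hxSW, hNR hxN⟩
      have hmem : x ∈ N ⊓ W := ⟨hxN, hxW⟩
      rw [hNW] at hmem
      exact (Submodule.mem_bot K).mp hmem
    · rw [codisjoint_iff, eq_top_iff, ← hc]
      refine sup_le ?_ ?_
      · exact le_trans le_sup_left le_sup_right
      · exact le_trans hRNW (sup_le_sup_left le_sup_right N)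
  set pn : L →ₗ[K] ↥N := N.projectionOnto (S ⊔ W) hcompl with hpndef
  have hpn_left : ∀ x : L, ∀ hx : x ∈ N, ((pn x : ↥N) : L) = x := by
    intro x hx
    have h0 := Submodule.projectionOnto_apply_left hcompl ⟨x, hx⟩
    exact congrArg Subtype.val h0
  have hpn_right : ∀ x : L, x ∈ S ⊔ W → pn x = 0 := fun x hx =>
    Submodule.projectionOnto_apply_of_mem_right hcompl hx
  have hpn_W : ∀ x : L, x ∈ W → pn x = 0 := fun x hx =>
    hpn_right x (Submodule.mem_sup_right hx)
  have hdecompR : ∀ c ∈ R, c - ((pn c : ↥N) : L) ∈ W := by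
    intro c hc'
    rcases Submodule.mem_sup.mp (hRNW hc') with ⟨u, hu, w, hw, rfl⟩
    have hadd : pn (u + w) = pn u + pn w := map_add _ _ _
    have hpnw : pn w = 0 := hpn_W w hw
    have hco : ((pn (u + w) : ↥N) : L) = u := by
      rw [hadd, hpnw, add_zero]
      exact hpn_left u hu
    rw [hco]
    simpa using hw
  -- the Lie algebra homomorphism Θ : L → End(N)
  have hfix : ∀ (x y : L) (u : ↥N),
      pn ⁅x, ⁅y, (u : L)⁆⁆ = pn ⁅x, ((pn ⁅y, (u : L)⁆ : ↥N) : L)⁆ := by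
    intro x y u
    have h1 : (⁅y, (u : L)⁆ : L) ∈ R := hRlie y _ (hNR u.2)
    have h2 : ⁅y, (u : L)⁆ - ((pn ⁅y, (u : L)⁆ : ↥N) : L) ∈ W := hdecompR _ h1
    have h3 : (⁅x, ⁅y, (u : L)⁆ - ((pn ⁅y, (u : L)⁆ : ↥N) : L)⁆ : L) ∈ W := hWlie x _ h2
    have h4 : pn ⁅x, ⁅y, (u : L)⁆ - ((pn ⁅y, (u : L)⁆ : ↥N) : L)⁆ = 0 := hpn_W _ h3
    rw [lie_sub, map_sub] at h4
    exact (sub_eq_zero.mp h4)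
  obtain ⟨Θ, hΘ⟩ := QB.exists_lieHom N pn hfix
  -- KEY : pairing of N against DD is "surjective"
  have hKEY : ∀ a : L, ∃ z ∈ N, ∀ c ∈ DD, B a c = B z c := by
    have hinj : Function.Injective (B.domRestrict₁₂ N DD).flip := by
      rw [← LinearMap.ker_eq_bot, LinearMap.ker_eq_bot']
      intro c hcz
      have hcN : (c : L) ∈ B.orthogonal N := by
        rw [QB.mem_orth]
        intro y hy
        have h0 := LinearMap.congr_fun hcz ⟨y, hy⟩
        simpa [LinearMap.domRestrict₁₂_apply] using h0
      rw [hNorth] at hcN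
      have hcoW : (c : L) ∈ W := haux1 ⟨hcN, hDDR c.2⟩
      have hmem : (c : L) ∈ DD ⊓ W := ⟨c.2, hcoW⟩
      rw [hDDW] at hmem
      exact Subtype.ext ((Submodule.mem_bot K).mp hmem)
    have hsurj : Function.Surjective (B.domRestrict₁₂ N DD) :=
      LinearMap.flip_injective_iff₁.mp hinj
    intro a
    obtain ⟨z, hz⟩ := hsurj ((B a).comp DD.subtype)
    refine ⟨(z : L), z.2, fun c hcD => ?_⟩
    have h0 := LinearMap.congr_fun hz ⟨c, hcD⟩
    simpa [LinearMap.domRestrict₁₂_apply] using h0.symm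
  -- absorption : Θ(L) = Θ(R)
  have habs : ∀ a : L, ∃ z : L, z ∈ R ∧ Θ a = Θ z := by
    intro a
    obtain ⟨z, hzN, hz⟩ := hKEY a
    refine ⟨z, hNR hzN, ?_⟩
    ext u
    rw [hΘ, hΘ]
    have hz0 : pn ⁅a - z, (u : L)⁆ = 0 := by
      set d : L := ⁅a - z, (u : L)⁆ with hddef
      have hdR : d ∈ R := hRlie _ _ (hNR u.2)
      have hWd : d - ((pn d : ↥N) : L) ∈ W := hdecompR _ hdR
      have hval : ((pn d : ↥N) : L) = 0 := by
        refine hNnondeg _ (pn d).2 fun y hyN => ?_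
        have e2 : B y (d - ((pn d : ↥N) : L)) = 0 := (QB.mem_orth.mp hWd) y (hNR hyN)
        have e3 : B y d = 0 := by
          rw [hsymm, hddef, hinv]
          have hcDD : (⁅(u : L), y⁆ : L) ∈ DD :=
            LieSubmodule.lie_mem_lie (hNR u.2) (hNR hyN)
          rw [map_sub, LinearMap.sub_apply, hz _ hcDD, sub_self]
        have e4 : ((pn d : ↥N) : L) = d - (d - ((pn d : ↥N) : L)) := (sub_sub_cancel _ _).symm
        rw [e4, map_sub, e3, e2, sub_zero]
      exact (ZeroMemClass.coe_eq_zero).mp hval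
    rw [sub_lie, map_sub] at hz0
    exact congrArg Subtype.val (sub_eq_zero.mp hz0)
  -- kernel dichotomy for Θ restricted to s
  set Θs : ↥s →ₗ⁅K⁆ Module.End K ↥N := Θ.comp s.incl with hΘsdef
  have hΘs_apply : ∀ a : ↥s, Θs a = Θ (a : L) := fun a => rfl
  rcases hs.eq_bot_or_eq_top (LieHom.ker Θs) with hker | hker
  · -- injective on s : contradiction via solvability
    exfalso
    have hinj : Function.Injective Θs := (LieHom.ker_eq_bot Θs).mp hker
    set Θr : ↥(LieAlgebra.radical K L) →ₗ⁅K⁆ Module.End K ↥N :=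
      Θ.comp (LieAlgebra.radical K L).incl with hΘrdef
    have hΘr_apply : ∀ z : ↥(LieAlgebra.radical K L), Θr z = Θ (z : L) := fun z => rfl
    haveI : LieAlgebra.IsSolvable ↥(LieAlgebra.radical K L) := inferInstance
    haveI hsolvr : LieAlgebra.IsSolvable ↥(Θr.range) := Θr.isSolvable_range
    have hle : Θs.range ≤ Θr.range := by
      intro x hx
      obtain ⟨a, rfl⟩ := (LieHom.mem_range (f := Θs) x).mp hx
      obtain ⟨z, hzR, hz⟩ := habs (a : L)
      rw [LieHom.mem_range]
      exact ⟨⟨z, hzR⟩, by rw [hΘr_apply, hΘs_apply, hz]⟩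
    set e := Θs.equivRangeOfInjective hinj with hedef
    have hginj : Function.Injective ((LieSubalgebra.inclusion hle).comp e.toLieHom) := by
      intro x y hxy
      exact e.injective (LieSubalgebra.inclusion_injective hle hxy)
    haveI hsolvs : LieAlgebra.IsSolvable ↥s := hginj.lieAlgebra_isSolvable
    haveI : Nontrivial ↥s := by
      rcases subsingleton_or_nontrivial ↥s with hss | hss
      · exact absurd ⟨fun x m => Subsingleton.elim _ _⟩ hs.non_abelian
      · exact hss
    have hlt := LieAlgebra.derivedSeries_lt_top_of_solvable K ↥s
    rcases hs.eq_bot_or_eq_top (LieAlgebra.derivedSeries K ↥s 1) with h1 | h1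
    · exact hs.non_abelian
        ((lie_abelian_iff_equiv_lie_abelian LieIdeal.topEquiv).mp
          ((LieAlgebra.abelian_iff_derived_one_eq_bot (⊤ : LieIdeal K ↥s)).mpr h1))
    · exact hlt.ne h1
  · -- Θ vanishes on s : N is a nondegenerate ideal
    have htriv : ∀ a : ↥s, ∀ u ∈ N, ⁅(a : L), u⁆ = (0 : L) := by
      intro a u huN
      have hbr : (⁅(a : L), u⁆ : L) ∈ N := by
        refine Submodule.mem_inf.mpr ⟨?_, hRlie _ _ (hNR huN)⟩
        rw [QB.mem_orth]
        intro b hb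
        rw [← hinv b (a : L) u]
        have hba : (⁅b, (a : L)⁆ : L) ∈ S := s.lie_mem hb a.2
        exact hNS u huN _ hba
      have h0 : Θs a = 0 := by
        have hm : a ∈ LieHom.ker Θs := by rw [hker]; trivial
        exact LieHom.mem_ker.mp hm
      have h1 : Θ (a : L) ⟨u, huN⟩ = 0 := by
        rw [← hΘs_apply, h0]
        rfl
      rw [hΘ] at h1
      have h2 : ((pn ⁅(a : L), u⁆ : ↥N) : L) = ⁅(a : L), u⁆ := hpn_left _ hbr
      rw [h1] at h2
      simpa using h2.symm
    have hNlie : ∀ z x : L, x ∈ N → ⁅z, x⁆ ∈ N := by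
      intro z x hxN
      have hz : z ∈ S ⊔ R := hc ▸ Submodule.mem_top
      rcases Submodule.mem_sup.mp hz with ⟨a, ha, b, hb, rfl⟩
      rw [add_lie]
      refine Submodule.add_mem _ ?_ ?_
      · have h0 := htriv ⟨a, ha⟩ x hxN
        rw [show (⁅a, x⁆ : L) = 0 from h0]
        exact N.zero_mem
      · rcases Submodule.mem_sup.mp (hRNW hb) with ⟨v, hv, w, hw, rfl⟩
        rw [add_lie]
        refine Submodule.add_mem _ ?_ ?_
        · refine Submodule.mem_inf.mpr ⟨?_, hRlie _ _ (hNR hxN)⟩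
          rw [QB.mem_orth]
          intro b' hb'
          rw [← hinv b' v x]
          have h0 := htriv ⟨b', hb'⟩ v hv
          rw [show (⁅b', v⁆ : L) = 0 from h0]
          simp
        · rw [hstep1 w hw x (hNR hxN)]
          exact N.zero_mem
    have hnd : N ⊓ B.orthogonal N = ⊥ := by
      rw [Submodule.eq_bot_iff]
      rintro x ⟨hx1, hx2⟩
      exact hNnondeg x hx1 fun y hy => (QB.mem_orth.mp hx2) y hy
    rcases hirr' N hNlie hnd with hNbot | hNtop
    · have h1 : R ≤ W := by
        have h0 := hRNW
        rw [hNbot, bot_sup_eq] at h0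
        exact h0
      exact le_antisymm h1 hWR
    · exact absurd (top_le_iff.mp (hNtop ▸ hNR)) hRneTop
end

section
/- Let (g,B) be a non solvable, non simple, B-irreducible quadratic Lie algebra with Levi decomposition g = s ⊕ r and suppose r = r^perp. Then s is simple, r is abelian, and g is isomorphic to the trivial T*-extension T_0^*(s) = s ⋉ s* (semidirect product with the coadjoint action, s* abelian). -/
/-- Auxiliary ideal used in the proof below. -/
noncomputable def auxJ {K : Type*} [Field K] {L : Type*} [LieRing L] [LieAlgebra K L]
    (s : LieSubalgebra K L) (P : L →ₗ[K] s) (F : L →ₗ[K] Module.Dual K s)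
    (I I' : LieIdeal K s)
    (hPbr : ∀ a b : L, P ⁅a, b⁆ = ⁅P a, P b⁆)
    (hFbr : ∀ a b : L, ∀ z : s, F ⁅a, b⁆ z = F b ⁅z, P a⁆ - F a ⁅z, P b⁆)
    (hbrac : ∀ y : s, y ∈ I' → ∀ x ∈ I, ⁅y, x⁆ = (0 : s)) : LieIdeal K L where
  carrier := {a : L | P a ∈ I ∧ ∀ y ∈ I', F a y = 0}
  add_mem' := by
    intro a b ha hb
    refine ⟨by rw [map_add]; exact add_mem ha.1 hb.1, fun y hy => ?_⟩
    rw [map_add, LinearMap.add_apply, ha.2 y hy, hb.2 y hy, add_zero]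
  zero_mem' := by
    refine ⟨by rw [map_zero]; exact zero_mem I, fun y hy => ?_⟩
    rw [map_zero]; rfl
  smul_mem' := by
    intro c a ha
    refine ⟨by rw [map_smul]; exact Submodule.smul_mem _ c ha.1, fun y hy => ?_⟩
    rw [map_smul, LinearMap.smul_apply, ha.2 y hy, smul_zero]
  lie_mem := by
    intro x m hm
    refine ⟨by rw [hPbr]; exact lie_mem_right _ _ I (P x) (P m) hm.1, fun y hy => ?_⟩
    rw [hFbr]
    have h1 : F m ⁅y, P x⁆ = 0 := hm.2 _ (lie_mem_left _ _ I' y (P x) hy)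
    have h2 : ⁅y, P m⁆ = (0 : s) := hbrac y hy (P m) hm.1
    rw [h1, h2, map_zero]
    simp

theorem mem_auxJ {K : Type*} [Field K] {L : Type*} [LieRing L] [LieAlgebra K L]
    (s : LieSubalgebra K L) (P : L →ₗ[K] s) (F : L →ₗ[K] Module.Dual K s)
    (I I' : LieIdeal K s) (hPbr) (hFbr) (hbrac) (a : L) :
    a ∈ auxJ s P F I I' hPbr hFbr hbrac ↔ (P a ∈ I ∧ ∀ y ∈ I', F a y = 0) :=
  Iff.rfl


/-- Let `(g,B)` be a non-solvable, non-simple, `B`-irreducible quadratic Lie algebra with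
Levi decomposition `g = s ⊕ r` and suppose `r = r^⊥`.  Then `s` is simple, `r` is abelian,
and `g` is isomorphic to the trivial `T^*`-extension `T₀^*(s) = s ⋉ s^*`, i.e. there is a
linear isomorphism `e : g ≃ s × s^*` transporting the bracket of `g` to the bracket
`⁅(x,f),(y,h)⁆ = (⁅x,y⁆, π(x)h - π(y)f)` of the semidirect product with the coadjoint
action `(π(x)h)(z) = -h ⁅x,z⁆ = h ⁅z,x⁆`. -/
theorem trivial_T_star_extension_of_radical_eq_orthogonal
    (K : Type*) [Field K] [CharZero K]
    (L : Type*) [LieRing L] [LieAlgebra K L] [Module.Finite K L]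
    (B : LinearMap.BilinForm K L)
    (hB : B.Nondegenerate)
    (hsymm : ∀ x y : L, B x y = B y x)
    (hinv : ∀ x y z : L, B ⁅x, y⁆ z = B x ⁅y, z⁆)
    (s : LieSubalgebra K L)
    (hs : LieAlgebra.IsSemisimple K s)
    (hLevi : IsCompl s.toSubmodule
      (LieSubmodule.toSubmodule (LieAlgebra.radical K L)))
    (hnonsolv : ¬ LieAlgebra.IsSolvable L)
    (hnonsimple : ¬ LieAlgebra.IsSimple K L)
    (hirr : ∀ J : LieIdeal K L,
      (∀ x ∈ J, (∀ y ∈ J, B x y = 0) → x = 0) → J = ⊥ ∨ J = ⊤)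
    (hrr : LieSubmodule.toSubmodule (LieAlgebra.radical K L)
      = B.orthogonal (LieSubmodule.toSubmodule (LieAlgebra.radical K L))) :
    LieAlgebra.IsSimple K s ∧
    IsLieAbelian (LieAlgebra.radical K L) ∧
    ∃ e : L ≃ₗ[K] (s × Module.Dual K s),
      ∀ a b : L,
        (e ⁅a, b⁆).1 = ⁅(e a).1, (e b).1⁆ ∧
        ∀ z : s, (e ⁅a, b⁆).2 z = (e b).2 ⁅z, (e a).1⁆ - (e a).2 ⁅z, (e b).1⁆ := by
  classical
  haveI := hs
  set r : Submodule K L := LieSubmodule.toSubmodule (LieAlgebra.radical K L) with hrdef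
  have hmemr : ∀ x : L, x ∈ r ↔ x ∈ LieAlgebra.radical K L := fun x =>
    LieSubmodule.mem_toSubmodule _
  -- B vanishes on r × r
  have hBr : ∀ x ∈ r, ∀ y ∈ r, B x y = 0 := by
    intro x hx y hy
    have : y ∈ B.orthogonal r := hrr ▸ hy
    exact this x hx
  -- radical is abelian (as a bracket identity in L)
  have habL : ∀ x ∈ r, ∀ y ∈ r, ⁅x, y⁆ = (0 : L) := by
    intro x hx y hy
    apply hB.1
    intro z
    rw [hinv]
    refine hBr x hx _ ?_
    rw [hmemr] at hy ⊢
    exact lie_mem_left K L (LieAlgebra.radical K L) y z hy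
  have habel : IsLieAbelian (LieAlgebra.radical K L) := by
    constructor
    intro x y
    ext
    exact habL x ((hmemr _).mpr x.2) y ((hmemr _).mpr y.2)
  -- the projection onto s along r
  set P : L →ₗ[K] s := Submodule.projectionOnto s.toSubmodule r hLevi with hPdef
  have hP1 : ∀ x : s, P ↑x = x := fun x =>
    Submodule.projectionOnto_apply_left hLevi x
  have hPr : ∀ w ∈ r, P w = 0 := fun w hw =>
    Submodule.projectionOnto_apply_of_mem_right hLevi hw
  have hP2 : ∀ a : L, a - ↑(P a) ∈ r := by
    intro a
    rw [← Submodule.projectionOnto_apply_eq_zero_iff hLevi, map_sub,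
      Submodule.projectionOnto_apply_left hLevi]
    exact sub_self _
  set F : L →ₗ[K] Module.Dual K s :=
    (LinearMap.compl₂ (LinearMap.comp B
      (LinearMap.id - s.toSubmodule.subtype ∘ₗ P)) s.toSubmodule.subtype) with hFdef
  have hF : ∀ (a : L) (z : s), F a z = B (a - ↑(P a)) ↑z := by
    intro a z
    simp only [hFdef, LinearMap.compl₂_apply, LinearMap.comp_apply,
      LinearMap.sub_apply, LinearMap.id_apply, map_sub]
    rfl
  -- the first projection of brackets
  have hPbr : ∀ a b : L, P ⁅a, b⁆ = ⁅P a, P b⁆ := by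
    intro a b
    have hmem : ⁅a, b⁆ - ↑⁅P a, P b⁆ ∈ r := by
      have h1 : ⁅a - ↑(P a), b⁆ ∈ r := by
        rw [hmemr]
        exact lie_mem_left K L (LieAlgebra.radical K L) _ b ((hmemr _).mp (hP2 a))
      have h2 : ⁅(↑(P a) : L), b - ↑(P b)⁆ ∈ r := by
        rw [hmemr]
        exact lie_mem_right K L (LieAlgebra.radical K L) _ _ ((hmemr _).mp (hP2 b))
      have : ⁅a, b⁆ - ↑⁅P a, P b⁆ = ⁅a - ↑(P a), b⁆ + ⁅(↑(P a) : L), b - ↑(P b)⁆ := by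
        rw [LieSubalgebra.coe_bracket]
        rw [sub_lie, lie_sub]
        abel
      rw [this]
      exact add_mem h1 h2
    have : ⁅a, b⁆ = ↑⁅P a, P b⁆ + (⁅a, b⁆ - ↑⁅P a, P b⁆) := by abel
    rw [this, map_add, hP1, hPr _ hmem, add_zero]
  -- the second projection of brackets
  have hFbr : ∀ a b : L, ∀ z : s, F ⁅a, b⁆ z = F b ⁅z, P a⁆ - F a ⁅z, P b⁆ := by
    intro a b z
    have hzero : ⁅a - ↑(P a), b - ↑(P b)⁆ = (0 : L) := habL _ (hP2 a) _ (hP2 b)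
    have hz0 : B ↑z ⁅a, b⁆ - B ↑z ⁅a, (↑(P b) : L)⁆ - B ↑z ⁅(↑(P a) : L), b⁆
        + B ↑z ⁅(↑(P a) : L), (↑(P b) : L)⁆ = 0 := by
      have h := congrArg (B (z : L)) hzero
      rw [map_zero] at h
      rw [sub_lie, lie_sub, lie_sub, map_sub, map_sub, map_sub] at h
      linear_combination h
    have e1 : F ⁅a, b⁆ z = B ↑z ⁅a, b⁆ - B ↑z ⁅(↑(P a) : L), (↑(P b) : L)⁆ := by
      rw [hF, hPbr, LieSubalgebra.coe_bracket, map_sub, LinearMap.sub_apply,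
        hsymm ⁅a, b⁆, hsymm ⁅(↑(P a) : L), (↑(P b) : L)⁆]
    have e2 : F b ⁅z, P a⁆ = B ↑z ⁅(↑(P a) : L), b⁆ - B ↑z ⁅(↑(P a) : L), (↑(P b) : L)⁆ := by
      rw [hF, hsymm, LieSubalgebra.coe_bracket, hinv, lie_sub, map_sub]
    have e3 : F a ⁅z, P b⁆ = - B ↑z ⁅a, (↑(P b) : L)⁆ + B ↑z ⁅(↑(P a) : L), (↑(P b) : L)⁆ := by
      rw [hF, hsymm, LieSubalgebra.coe_bracket, hinv, lie_sub, map_sub,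
        ← lie_skew (↑(P b) : L) a, ← lie_skew (↑(P b) : L) (↑(P a) : L), map_neg, map_neg]
      ring
    rw [e1, e2, e3]
    linear_combination hz0
  -- an element orthogonal to s and r is zero
  have hBtot : ∀ x : L, (∀ z : s, B x ↑z = 0) → (∀ w ∈ r, B x w = 0) → x = 0 := by
    intro x h1 h2
    apply hB.1
    intro y
    have hy : y ∈ s.toSubmodule ⊔ r := by rw [hLevi.sup_eq_top]; exact Submodule.mem_top
    obtain ⟨u, hu, v, hv, rfl⟩ := Submodule.mem_sup.mp hy
    rw [map_add, h1 ⟨u, hu⟩, h2 v hv, add_zero]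
  set E : L →ₗ[K] s × Module.Dual K s := LinearMap.prod P F with hEdef
  have hEinj : Function.Injective E := by
    rw [← LinearMap.ker_eq_bot]
    rw [Submodule.eq_bot_iff]
    intro x hx
    rw [LinearMap.mem_ker] at hx
    have hx1 : P x = 0 := congrArg Prod.fst hx
    have hx2 : F x = 0 := congrArg Prod.snd hx
    have hxr : x ∈ r := by
      have := hP2 x
      rw [hx1] at this
      simpa using this
    refine hBtot x ?_ (fun w hw => hBr x hxr w hw)
    intro z
    have := congrFun (congrArg DFunLike.coe hx2) z
    rw [hF, hx1] at this
    simpa using this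
  have hrefl : B.IsRefl := fun x y h => by rw [hsymm]; exact h
  have hdim : Module.finrank K L = Module.finrank K (s × Module.Dual K s) := by
    have h1 : Module.finrank K s.toSubmodule + Module.finrank K r = Module.finrank K L :=
      Submodule.finrank_add_eq_of_isCompl hLevi
    have h2 : Module.finrank K (B.orthogonal r) = Module.finrank K L - Module.finrank K r :=
      LinearMap.BilinForm.finrank_orthogonal hB r
    rw [← hrr] at h2
    have h3 : Module.finrank K (Module.Dual K s) = Module.finrank K s :=
      Subspace.dual_finrank_eq
    have h4 : Module.finrank K (s × Module.Dual K s)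
        = Module.finrank K s + Module.finrank K (Module.Dual K s) := Module.finrank_prod
    have h5 : Module.finrank K s.toSubmodule = Module.finrank K s := rfl
    rw [h4, h3]
    omega
  have hEsurj : Function.Surjective E :=
    (LinearMap.injective_iff_surjective_of_finrank_eq_finrank hdim).mp hEinj
  have hdual : ∀ g : Module.Dual K s, ∃ v : L, v ∈ r ∧ P v = 0 ∧ ∀ z : s, B v ↑z = g z := by
    intro g
    obtain ⟨v, hv⟩ := hEsurj (0, g)
    have hv1 : P v = 0 := congrArg Prod.fst hv
    have hv2 : F v = g := congrArg Prod.snd hv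
    have hvr : v ∈ r := by
      have := hP2 v
      rw [hv1] at this
      simpa using this
    refine ⟨v, hvr, hv1, fun z => ?_⟩
    have := congrFun (congrArg DFunLike.coe hv2) z
    rw [hF, hv1] at this
    simpa using this
  -- s is not abelian
  have hsnontriv : ¬ IsLieAbelian s := by
    intro h
    haveI := h
    haveI : Subsingleton s := LieAlgebra.subsingleton_of_hasTrivialRadical_lie_abelian K s
    have hs0 : s.toSubmodule = ⊥ := by
      rw [Submodule.eq_bot_iff]
      intro x hx
      have : (⟨x, hx⟩ : s) = 0 := Subsingleton.elim _ _
      exact congrArg Subtype.val this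
    have hrtop : r = ⊤ := by
      have := hLevi.sup_eq_top
      rw [hs0, bot_sup_eq] at this
      exact this
    have hradtop : LieAlgebra.radical K L = ⊤ := by
      rw [← LieSubmodule.toSubmodule_eq_top]
      exact hrtop
    apply hnonsolv
    haveI hsol : LieAlgebra.IsSolvable (LieAlgebra.radical K L) := inferInstance
    rw [hradtop] at hsol
    exact Function.Surjective.lieAlgebra_isSolvable (f := (LieIdeal.topEquiv (R := K) (L := L)).toLieHom)
      LieIdeal.topEquiv.surjective
  -- s is simple
  have hideal : ∀ I : LieIdeal K s, I = ⊥ ∨ I = ⊤ := by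
    intro I
    by_contra hcon
    push_neg at hcon
    obtain ⟨hIbot, hItop⟩ := hcon
    have hcompl : IsCompl I Iᶜ := isCompl_compl
    have hbrac : ∀ y : s, y ∈ Iᶜ → ∀ x ∈ I, ⁅y, x⁆ = (0 : s) := by
      intro y hy x hx
      have h1 : ⁅y, x⁆ ∈ ⁅Iᶜ, I⁆ := LieSubmodule.lie_mem_lie hy hx
      have h2 : ⁅Iᶜ, I⁆ ≤ Iᶜ ⊓ I := LieSubmodule.lie_le_inf _ _
      have h3 : Iᶜ ⊓ I = ⊥ := by rw [inf_comm]; exact hcompl.inf_eq_bot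
      have := h2 h1
      rw [h3, LieSubmodule.mem_bot] at this
      exact this
    have hIc : IsCompl (LieSubmodule.toSubmodule I) (LieSubmodule.toSubmodule Iᶜ) := by
      apply IsCompl.of_eq
      · rw [← LieSubmodule.inf_toSubmodule, hcompl.inf_eq_bot, LieSubmodule.bot_toSubmodule]
      · rw [← LieSubmodule.sup_toSubmodule, hcompl.sup_eq_top, LieSubmodule.top_toSubmodule]
    set J : LieIdeal K L := auxJ s P F I Iᶜ hPbr hFbr hbrac with hJdef
    have hmemJ : ∀ a : L, a ∈ J ↔ (P a ∈ I ∧ ∀ y ∈ Iᶜ, F a y = 0) := fun a =>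
      mem_auxJ s P F I Iᶜ hPbr hFbr hbrac a
    have hsJ : ∀ u : s, u ∈ I → (u : L) ∈ J := by
      intro u hu
      rw [hmemJ]
      constructor
      · rw [hP1]; exact hu
      · intro y hy
        rw [hF, hP1, sub_self, map_zero]
        rfl
    have hJnd : ∀ x ∈ J, (∀ y ∈ J, B x y = 0) → x = 0 := by
      intro x hxJ hxy
      obtain ⟨hxP, hxF⟩ := (hmemJ x).mp hxJ
      have hPx : P x = 0 := by
        by_contra hne
        set π : s →ₗ[K] LieSubmodule.toSubmodule I :=
          Submodule.projectionOnto _ _ hIc with hπdef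
        have hu0 : (⟨P x, hxP⟩ : LieSubmodule.toSubmodule I) ≠ 0 := by
          intro h
          exact hne (congrArg Subtype.val h)
        obtain ⟨φ, hφ⟩ : ∃ φ : Module.Dual K (LieSubmodule.toSubmodule I),
            φ ⟨P x, hxP⟩ ≠ 0 := by
          by_contra h
          push_neg at h
          exact hu0 ((Module.forall_dual_apply_eq_zero_iff K _).mp h)
        set g : Module.Dual K s := φ ∘ₗ π with hgdef
        obtain ⟨v, hvr, hvP, hvB⟩ := hdual g
        have hvJ : v ∈ J := by
          rw [hmemJ]
          refine ⟨by rw [hvP]; exact zero_mem I, fun y hy => ?_⟩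
          have : F v y = B v ↑y := by rw [hF, hvP]; simp
          rw [this, hvB]
          rw [hgdef]
          simp only [LinearMap.comp_apply]
          rw [hπdef, Submodule.projectionOnto_apply_of_mem_right hIc hy, map_zero]
        have hBxv : B x v = 0 := hxy v hvJ
        have hsplit : B x v = B (↑(P x)) v + B (x - ↑(P x)) v := by
          have hxx : x = ↑(P x) + (x - ↑(P x)) := by abel
          conv_lhs => rw [hxx]
          rw [map_add, LinearMap.add_apply]
        have hz2 : B (x - ↑(P x)) v = 0 := hBr _ (hP2 x) v hvr
        have hz3 : B (↑(P x)) v = g (P x) := by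
          rw [hsymm]; exact hvB (P x)
        have hgPx : g (P x) = φ ⟨P x, hxP⟩ := by
          rw [hgdef]
          simp only [LinearMap.comp_apply]
          rw [hπdef, Submodule.projectionOnto_apply_left hIc ⟨P x, hxP⟩]
        rw [hsplit, hz2, hz3, hgPx, add_zero] at hBxv
        exact hφ hBxv
      have hxr : x ∈ r := by
        have := hP2 x
        rw [hPx] at this
        simpa using this
      refine hBtot x ?_ (fun w hw => hBr x hxr w hw)
      intro z
      have hfx : ∀ z : s, B x ↑z = F x z := by
        intro z
        rw [hF, hPx]
        simp
      have hz : z ∈ LieSubmodule.toSubmodule I ⊔ LieSubmodule.toSubmodule Iᶜ := by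
        rw [hIc.sup_eq_top]; exact Submodule.mem_top
      obtain ⟨u, hu, w, hw, huw⟩ := Submodule.mem_sup.mp hz
      have hBu : B x ↑u = 0 := hxy ↑u (hsJ u hu)
      have hBw : B x ↑w = 0 := by rw [hfx]; exact hxF w hw
      have : (↑z : L) = ↑u + ↑w := by rw [← huw]; rfl
      rw [this, map_add, hBu, hBw, add_zero]
    rcases hirr J hJnd with hbot | htop
    · obtain ⟨u, hu, hune⟩ : ∃ u : s, u ∈ I ∧ u ≠ 0 := by
        by_contra h
        push_neg at h
        exact hIbot ((LieSubmodule.eq_bot_iff I).mpr h)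
      have := hsJ u hu
      rw [hbot, LieSubmodule.mem_bot] at this
      exact hune (by ext; exact this)
    · obtain ⟨z, hz⟩ : ∃ z : s, z ∉ I := by
        by_contra h
        push_neg at h
        exact hItop (eq_top_iff.mpr (fun z _ => h z))
      have : (↑z : L) ∈ J := htop ▸ LieSubmodule.mem_top (↑z : L)
      obtain ⟨h1, -⟩ := (hmemJ _).mp this
      rw [hP1] at h1
      exact hz h1
  refine ⟨⟨hideal, hsnontriv⟩, habel, ?_⟩
  refine ⟨LinearEquiv.ofBijective E ⟨hEinj, hEsurj⟩, ?_⟩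
  intro a b
  have he1 : ∀ x : L, ((LinearEquiv.ofBijective E ⟨hEinj, hEsurj⟩) x).1 = P x := fun x => rfl
  have he2 : ∀ x : L, ((LinearEquiv.ofBijective E ⟨hEinj, hEsurj⟩) x).2 = F x := fun x => rfl
  rw [he1, he1, he1]
  refine ⟨hPbr a b, fun z => ?_⟩
  rw [he2, he2, he2]
  exact hFbr a b z
end

section
/- Let g_1 be a quadratic Lie algebra with invariant scalar product B_1, let g_2 be a Lie algebra, and let φ: g_2 → Der(g_1, B_1) be a Lie algebra homomorphism into the B_1-skew-symmetric derivations of g_1. Then the vector space g = g_2 ⊕ g_1 ⊕ g_2* with bracket [x_2+x_1+f, y_2+y_1+h] = [x_2,y_2] + ([x_1,y_1] + φ(x_2)(y_1) − φ(y_2)(x_1)) + (π(x_2)(h) − π(y_2)(f) + ψ(x_1,y_1)), where π is the coadjoint representation of g_2 and ψ(x_1,y_1)(z_2) = B_1(φ(z_2)(x_1), y_1), is a Lie algebra. -/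
section
variable {K : Type*} [Field K] [CharZero K]
  {L₁ : Type*} [LieRing L₁] [LieAlgebra K L₁]
  {L₂ : Type*} [LieRing L₂] [LieAlgebra K L₂]

/-- The bracket of the double extension of `(g₁, B₁)` by `g₂` via `φ`, on the vector space
`g₂ × g₁ × g₂^*`:
`⁅(x₂,x₁,f),(y₂,y₁,h)⁆ = (⁅x₂,y₂⁆, ⁅x₁,y₁⁆ + φ(x₂)(y₁) - φ(y₂)(x₁),
  π(x₂)(h) - π(y₂)(f) + ψ(x₁,y₁))`
where `π` is the coadjoint representation `(π(x)(f))(y) = -f ⁅x,y⁆`, and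
`ψ(x₁,y₁)(z₂) = B₁ (φ(z₂)(x₁)) y₁`. -/
noncomputable def doubleExtBracket (B₁ : LinearMap.BilinForm K L₁)
    (φ : L₂ →ₗ[K] Module.End K L₁)
    (x y : L₂ × L₁ × Module.Dual K L₂) : L₂ × L₁ × Module.Dual K L₂ :=
  (⁅x.1, y.1⁆,
   ⁅x.2.1, y.2.1⁆ + φ x.1 y.2.1 - φ y.1 x.2.1,
   x.2.2.comp (LieAlgebra.ad K L₂ y.1)
     - y.2.2.comp (LieAlgebra.ad K L₂ x.1)
     + (B₁.flip y.2.1).comp ((LinearMap.applyₗ x.2.1).comp φ))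

/-- The cyclic form of the Jacobi identity with outer brackets. -/
lemma doubleExt_jac3 {L : Type*} [LieRing L] (x y z : L) :
    ⁅⁅x,y⁆,z⁆ + ⁅⁅y,z⁆,x⁆ + ⁅⁅z,x⁆,y⁆ = 0 := by
  have h := lie_jacobi x y z
  rw [← lie_skew z ⁅x,y⁆, ← lie_skew x ⁅y,z⁆, ← lie_skew y ⁅z,x⁆] at h
  rw [show -⁅⁅y,z⁆,x⁆ + -⁅⁅z,x⁆,y⁆ + -⁅⁅x,y⁆,z⁆
      = -(⁅⁅x,y⁆,z⁆ + ⁅⁅y,z⁆,x⁆ + ⁅⁅z,x⁆,y⁆) by abel] at h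
  exact neg_eq_zero.mp h

/-- The double extension of a quadratic Lie algebra `(g₁,B₁)` by a Lie algebra `g₂` via a
homomorphism `φ : g₂ → Der(g₁,B₁)` is a Lie algebra: the bracket above is bilinear,
alternating, and satisfies the Jacobi identity. -/
theorem doubleExtBracket_isLieBracket
    (B₁ : LinearMap.BilinForm K L₁)
    (hB : B₁.Nondegenerate)
    (hsymm : ∀ x y : L₁, B₁ x y = B₁ y x)
    (hinv : ∀ x y z : L₁, B₁ ⁅x, y⁆ z = B₁ x ⁅y, z⁆)
    (φ : L₂ →ₗ[K] Module.End K L₁)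
    (hφder : ∀ z : L₂, ∀ a b : L₁, φ z ⁅a, b⁆ = ⁅φ z a, b⁆ + ⁅a, φ z b⁆)
    (hφskew : ∀ z : L₂, ∀ a b : L₁, B₁ (φ z a) b = - B₁ a (φ z b))
    (hφhom : ∀ w z : L₂, φ ⁅w, z⁆ = φ w * φ z - φ z * φ w) :
    (∀ X Y Z : L₂ × L₁ × Module.Dual K L₂,
        doubleExtBracket B₁ φ (X + Y) Z
          = doubleExtBracket B₁ φ X Z + doubleExtBracket B₁ φ Y Z) ∧
    (∀ (c : K) (X Y : L₂ × L₁ × Module.Dual K L₂),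
        doubleExtBracket B₁ φ (c • X) Y = c • doubleExtBracket B₁ φ X Y) ∧
    (∀ X : L₂ × L₁ × Module.Dual K L₂, doubleExtBracket B₁ φ X X = 0) ∧
    (∀ X Y Z : L₂ × L₁ × Module.Dual K L₂,
        doubleExtBracket B₁ φ (doubleExtBracket B₁ φ X Y) Z
          + doubleExtBracket B₁ φ (doubleExtBracket B₁ φ Y Z) X
          + doubleExtBracket B₁ φ (doubleExtBracket B₁ φ Z X) Y = 0) := by
  refine ⟨?_, ?_, ?_, ?_⟩
  · -- additivity in the first argument
    intro X Y Z
    refine Prod.ext ?_ (Prod.ext ?_ ?_)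
    · simp [doubleExtBracket]
    · simp [doubleExtBracket]; abel
    · simp [doubleExtBracket]; ext w; simp; try ring
  · -- homogeneity in the first argument
    intro c X Y
    refine Prod.ext ?_ (Prod.ext ?_ ?_)
    · simp [doubleExtBracket]
    · simp [doubleExtBracket, smul_sub, smul_add]; try abel
    · simp [doubleExtBracket]; ext w; simp [smul_sub, smul_add]; try ring
  · -- alternation
    intro X
    refine Prod.ext ?_ (Prod.ext ?_ ?_)
    · simp [doubleExtBracket]
    · simp [doubleExtBracket]
    · simp only [doubleExtBracket, sub_self, zero_add]
      ext w
      simp only [LinearMap.coe_comp, Function.comp_apply, LinearMap.applyₗ_apply_apply,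
        LinearMap.zero_apply, Prod.snd_zero]
      rw [LinearMap.BilinForm.flip_apply]
      linear_combination (hφskew w X.2.1 X.2.1 - hsymm X.2.1 (φ w X.2.1)) / 2
  · -- the Jacobi identity
    intro X Y Z
    have hsk : ∀ (w : L₂) (u v : L₁), ⁅u, φ w v⁆ = -⁅φ w v, u⁆ :=
      fun w u v => by rw [← lie_skew (φ w v) u, neg_neg]
    refine Prod.ext ?_ (Prod.ext ?_ ?_)
    · simpa [doubleExtBracket] using doubleExt_jac3 X.1 Y.1 Z.1
    · simp only [doubleExtBracket, hφhom, hφder, LinearMap.sub_apply, Module.End.mul_apply,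
        map_add, map_sub, add_lie, sub_lie, lie_add, lie_sub, hsk, Prod.snd_add, Prod.fst_add,
        Prod.snd_zero, Prod.fst_zero]
      rw [show ⁅⁅X.2.1, Y.2.1⁆, Z.2.1⁆ = -⁅⁅Y.2.1, Z.2.1⁆, X.2.1⁆ - ⁅⁅Z.2.1, X.2.1⁆, Y.2.1⁆ by
        have h := doubleExt_jac3 X.2.1 Y.2.1 Z.2.1
        rw [add_assoc] at h
        rw [eq_neg_of_add_eq_zero_left h]; abel]
      abel
    · show _ = (0 : L₂ × L₁ × Module.Dual K L₂).2.2
      ext w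
      simp only [doubleExtBracket, Prod.snd_add, Prod.fst_add, Prod.snd_zero,
        LinearMap.zero_apply, LinearMap.add_apply,
        LinearMap.sub_apply, LinearMap.coe_comp, Function.comp_apply, LieAlgebra.ad_apply,
        LinearMap.applyₗ_apply_apply, LinearMap.BilinForm.flip_apply, hφhom, hφder,
        Module.End.mul_apply, map_add, map_sub]
      have hf : X.2.2 ⁅⁅Y.1, Z.1⁆, w⁆ = X.2.2 ⁅Y.1, ⁅Z.1, w⁆⁆ - X.2.2 ⁅Z.1, ⁅Y.1, w⁆⁆ := by
        rw [lie_lie, map_sub]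
      have hh : Y.2.2 ⁅⁅Z.1, X.1⁆, w⁆ = Y.2.2 ⁅Z.1, ⁅X.1, w⁆⁆ - Y.2.2 ⁅X.1, ⁅Z.1, w⁆⁆ := by
        rw [lie_lie, map_sub]
      have hk : Z.2.2 ⁅⁅X.1, Y.1⁆, w⁆ = Z.2.2 ⁅X.1, ⁅Y.1, w⁆⁆ - Z.2.2 ⁅Y.1, ⁅X.1, w⁆⁆ := by
        rw [lie_lie, map_sub]
      have d1 : B₁ X.2.1 ((φ w) ⁅Y.2.1, Z.2.1⁆)
          = B₁ X.2.1 ⁅(φ w) Y.2.1, Z.2.1⁆ + B₁ X.2.1 ⁅Y.2.1, (φ w) Z.2.1⁆ := by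
        rw [hφder]; exact map_add _ _ _
      linear_combination (-hf) + (-hh) + (-hk)
        + hφskew Z.1 ((φ w) X.2.1) Y.2.1 - hφskew w ((φ Z.1) Y.2.1) X.2.1
          - hsymm ((φ w) X.2.1) ((φ Z.1) Y.2.1)
        + hφskew X.1 ((φ w) Y.2.1) Z.2.1 - hφskew w ((φ X.1) Z.2.1) Y.2.1
          - hsymm ((φ w) Y.2.1) ((φ X.1) Z.2.1)
        + hφskew Y.1 ((φ w) Z.2.1) X.2.1 - hφskew w ((φ Y.1) X.2.1) Z.2.1
          - hsymm ((φ w) Z.2.1) ((φ Y.1) X.2.1)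
        + 2 * hinv ((φ w) X.2.1) Y.2.1 Z.2.1
        + hinv Z.2.1 ((φ w) X.2.1) Y.2.1 + hsymm Z.2.1 ⁅(φ w) X.2.1, Y.2.1⁆
        + hinv X.2.1 ((φ w) Y.2.1) Z.2.1 - hsymm X.2.1 ⁅(φ w) Y.2.1, Z.2.1⁆
        - hinv Y.2.1 ((φ w) Z.2.1) X.2.1 - hsymm Y.2.1 ⁅(φ w) Z.2.1, X.2.1⁆
        + 2 * hφskew w X.2.1 ⁅Y.2.1, Z.2.1⁆ - 2 * d1 - 2 * hsymm X.2.1 ⁅Y.2.1, (φ w) Z.2.1⁆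

end
end

section
/- Let g = T_φ(g_1, B_1, g_2) be the double extension of a quadratic Lie algebra (g_1,B_1) by a Lie algebra g_2 via φ: g_2 → Der(g_1,B_1), and let γ be any invariant symmetric bilinear form on g_2. Then the bilinear form B_γ on g defined by B_γ(x_2+x_1+f, y_2+y_1+h) = γ(x_2,y_2) + B_1(x_1,y_1) + f(y_2) + h(x_2) is a nondegenerate, symmetric, invariant bilinear form on g. -/
section
variable {K : Type*} [Field K] [CharZero K]
  {L₁ : Type*} [LieRing L₁] [LieAlgebra K L₁]
  {L₂ : Type*} [LieRing L₂] [LieAlgebra K L₂]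

/-- The bilinear form `B_γ` on the double extension:
`B_γ(x₂+x₁+f, y₂+y₁+h) = γ(x₂,y₂) + B₁(x₁,y₁) + f(y₂) + h(x₂)`. -/
noncomputable def doubleExtForm (B₁ : LinearMap.BilinForm K L₁)
    (γ : LinearMap.BilinForm K L₂)
    (x y : L₂ × L₁ × Module.Dual K L₂) : K :=
  γ x.1 y.1 + B₁ x.2.1 y.2.1 + x.2.2 y.1 + y.2.2 x.1

/-- On the double extension `T_φ(g₁,B₁,g₂)`, for any invariant symmetric bilinear form `γ`
on `g₂`, the form `B_γ` is symmetric, invariant and nondegenerate. -/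
theorem doubleExtForm_symm_invariant_nondegenerate
    (B₁ : LinearMap.BilinForm K L₁)
    (hB : B₁.Nondegenerate)
    (hsymm : ∀ x y : L₁, B₁ x y = B₁ y x)
    (hinv : ∀ x y z : L₁, B₁ ⁅x, y⁆ z = B₁ x ⁅y, z⁆)
    (φ : L₂ →ₗ[K] Module.End K L₁)
    (hφder : ∀ z : L₂, ∀ a b : L₁, φ z ⁅a, b⁆ = ⁅φ z a, b⁆ + ⁅a, φ z b⁆)
    (hφskew : ∀ z : L₂, ∀ a b : L₁, B₁ (φ z a) b = - B₁ a (φ z b))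
    (hφhom : ∀ w z : L₂, φ ⁅w, z⁆ = φ w * φ z - φ z * φ w)
    (γ : LinearMap.BilinForm K L₂)
    (hγsymm : ∀ x y : L₂, γ x y = γ y x)
    (hγinv : ∀ x y z : L₂, γ ⁅x, y⁆ z = γ x ⁅y, z⁆) :
    (∀ X Y : L₂ × L₁ × Module.Dual K L₂,
        doubleExtForm B₁ γ X Y = doubleExtForm B₁ γ Y X) ∧
    (∀ X Y Z : L₂ × L₁ × Module.Dual K L₂,
        doubleExtForm B₁ γ (doubleExtBracket B₁ φ X Y) Z
          = doubleExtForm B₁ γ X (doubleExtBracket B₁ φ Y Z)) ∧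
    (∀ X : L₂ × L₁ × Module.Dual K L₂,
        (∀ Y, doubleExtForm B₁ γ X Y = 0) → X = 0) := by
  refine ⟨?_, ?_, ?_⟩
  · intro X Y
    simp only [doubleExtForm]
    rw [hsymm, hγsymm]; ring
  · intro X Y Z
    obtain ⟨x₂, x₁, f⟩ := X
    obtain ⟨y₂, y₁, g⟩ := Y
    obtain ⟨z₂, z₁, k⟩ := Z
    simp only [doubleExtForm, doubleExtBracket, LinearMap.add_apply, LinearMap.sub_apply,
      LinearMap.comp_apply, LieAlgebra.ad_apply, LinearMap.applyₗ_apply_apply, LinearMap.flip_apply, LinearMap.coe_mk, AddHom.coe_mk, map_add, map_sub]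
    have h1 : B₁ (φ y₂ x₁) z₁ = - B₁ x₁ (φ y₂ z₁) := hφskew _ _ _
    have h2 : B₁ (φ z₂ x₁) y₁ = - B₁ x₁ (φ z₂ y₁) := hφskew _ _ _
    have h3 : g ⁅x₂, z₂⁆ = - g ⁅z₂, x₂⁆ := by rw [← lie_skew, map_neg]
    have h4 : k ⁅x₂, y₂⁆ = - k ⁅y₂, x₂⁆ := by rw [← lie_skew, map_neg]
    have e1 : (B₁.flip y₁) ((φ z₂) x₁) = B₁ ((φ z₂) x₁) y₁ := LinearMap.flip_apply B₁ _ _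
    have e2 : (B₁.flip z₁) ((φ x₂) y₁) = B₁ ((φ x₂) y₁) z₁ := LinearMap.flip_apply B₁ _ _
    rw [e1, e2]
    linear_combination hγinv x₂ y₂ z₂ + hinv x₁ y₁ z₁ - h1 + h2 - h3 + h4
  · intro X hX
    obtain ⟨x₂, x₁, f⟩ := X
    have hx1 : x₁ = 0 := by
      apply hB.1
      intro y₁
      have := hX (0, y₁, 0)
      simpa [doubleExtForm] using this
    have hx2 : x₂ = 0 := by
      rw [← Module.forall_dual_apply_eq_zero_iff K]
      intro h
      have := hX (0, 0, h)
      simpa [doubleExtForm] using this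
    have hf : f = 0 := by
      ext y₂
      have := hX (y₂, 0, 0)
      simp [doubleExtForm, hx2] at this
      simpa using this
    simp [hx1, hx2, hf, Prod.ext_iff]

end
end

section
/- Let d be a finite-dimensional solvable Lie algebra of dimension at most 3 over a field of characteristic 0 admitting a nondegenerate symmetric invariant bilinear form. Then d is abelian. -/
open Module

/-- Auxiliary: lift a generating family of a quotient of bounded finrank. -/
lemma aux_quot_gen {K L : Type*} [Field K] [AddCommGroup L] [Module K L] [Module.Finite K L]
    (Z : Submodule K L) (n : ℕ) (h : finrank K (L ⧸ Z) ≤ n) :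
    ∃ f : Fin n → L, ∀ a : L, ∃ c : Fin n → K, a - ∑ i, c i • f i ∈ Z := by
  classical
  set Q := L ⧸ Z
  let bb := Module.finBasis K Q
  let g : Fin n → Q := fun i => if h' : (i : ℕ) < finrank K Q then bb ⟨i, h'⟩ else 0
  have hspan : Submodule.span K (Set.range g) = ⊤ := by
    rw [eq_top_iff, ← bb.span_eq]
    apply Submodule.span_le.mpr
    rintro q ⟨i, rfl⟩
    apply Submodule.subset_span
    refine ⟨⟨i, i.2.trans_le h⟩, ?_⟩
    have : ((⟨(i:ℕ), i.2.trans_le h⟩ : Fin n) : ℕ) < finrank K Q := i.2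
    simp only [g, dif_pos this]
  choose f hf using fun i => Submodule.mkQ_surjective Z (g i)
  refine ⟨f, fun a => ?_⟩
  have : Z.mkQ a ∈ Submodule.span K (Set.range g) := hspan ▸ Submodule.mem_top
  rw [Submodule.mem_span_range_iff_exists_fun] at this
  obtain ⟨c, hc⟩ := this
  refine ⟨c, ?_⟩
  rw [← Submodule.Quotient.mk_eq_zero]
  show Z.mkQ _ = 0
  simp [map_sub, map_sum, map_smul, hf, hc]

/-- If the quotient by a central submodule has dimension at most `2`, all brackets lie
on a single line. -/
lemma aux_bracket_span {K L : Type*} [Field K] [LieRing L] [LieAlgebra K L] [Module.Finite K L]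
    (Z : Submodule K L) (hZ : ∀ z ∈ Z, ∀ w : L, ⁅w, z⁆ = 0)
    (h : finrank K (L ⧸ Z) ≤ 2) :
    ∃ v : L, ∀ a b : L, ⁅a, b⁆ ∈ Submodule.span K {v} := by
  obtain ⟨f, hf⟩ := aux_quot_gen Z 2 h
  refine ⟨⁅f 0, f 1⁆, fun a b => ?_⟩
  obtain ⟨c, hc⟩ := hf a
  obtain ⟨d, hd⟩ := hf b
  have hZ' : ∀ z ∈ Z, ∀ w : L, ⁅z, w⁆ = 0 := fun z hz w => by
    rw [← lie_skew, hZ z hz w, neg_zero]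
  set za := a - ∑ i, c i • f i with hza
  set zb := b - ∑ i, d i • f i with hzb
  have ha : a = c 0 • f 0 + c 1 • f 1 + za := by rw [hza, Fin.sum_univ_two]; abel
  have hb : b = d 0 • f 0 + d 1 • f 1 + zb := by rw [hzb, Fin.sum_univ_two]; abel
  have key : ⁅a, b⁆ = (c 0 * d 1 - c 1 * d 0) • ⁅f 0, f 1⁆ := by
    rw [ha, hb]
    simp only [add_lie, lie_add, smul_lie, lie_smul, lie_self, smul_zero,
      hZ _ hd _, hZ' _ hc _, ← lie_skew (f 1) (f 0)]
    module
  rw [key]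
  exact Submodule.smul_mem _ _ (Submodule.mem_span_singleton_self _)

/-- If the quotient by a central submodule has dimension at most `1`, the algebra is abelian. -/
lemma aux_bracket_zero {K L : Type*} [Field K] [LieRing L] [LieAlgebra K L] [Module.Finite K L]
    (Z : Submodule K L) (hZ : ∀ z ∈ Z, ∀ w : L, ⁅w, z⁆ = 0)
    (h : finrank K (L ⧸ Z) ≤ 1) :
    ∀ a b : L, ⁅a, b⁆ = 0 := by
  obtain ⟨f, hf⟩ := aux_quot_gen Z 1 h
  intro a b
  obtain ⟨c, hc⟩ := hf a
  obtain ⟨d, hd⟩ := hf b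
  have hZ' : ∀ z ∈ Z, ∀ w : L, ⁅z, w⁆ = 0 := fun z hz w => by
    rw [← lie_skew, hZ z hz w, neg_zero]
  set za := a - ∑ i, c i • f i with hza
  set zb := b - ∑ i, d i • f i with hzb
  have ha : a = c 0 • f 0 + za := by rw [hza, Fin.sum_univ_one]; abel
  have hb : b = d 0 • f 0 + zb := by rw [hzb, Fin.sum_univ_one]; abel
  rw [ha, hb]
  simp [add_lie, lie_add, smul_lie, lie_smul, lie_self, hZ _ hd _, hZ' _ hc _]

/-- A solvable Lie algebra of dimension at most `3` over a field of characteristic zero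
admitting a nondegenerate symmetric invariant bilinear form is abelian. -/
theorem solvable_quadratic_dim_le_three_abelian
    (K : Type*) [Field K] [CharZero K]
    (L : Type*) [LieRing L] [LieAlgebra K L] [Module.Finite K L]
    (hdim : Module.finrank K L ≤ 3)
    [LieAlgebra.IsSolvable L]
    (B : LinearMap.BilinForm K L)
    (hB : B.Nondegenerate)
    (hsymm : ∀ x y : L, B x y = B y x)
    (hinv : ∀ x y z : L, B ⁅x, y⁆ z = B x ⁅y, z⁆) :
    IsLieAbelian L := by
  classical
  rcases subsingleton_or_nontrivial L with hL | hL
  · exact ⟨fun x y => Subsingleton.elim _ _⟩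
  -- the derived submodule and the center
  set Z : Submodule K L := LieSubmodule.toSubmodule (LieAlgebra.center K L) with hZdef
  set D : Submodule K L := LieSubmodule.toSubmodule (LieAlgebra.derivedSeries K L 1) with hDdef
  have hDspan : D = Submodule.span K {m : L | ∃ a b : L, ⁅a, b⁆ = m} := by
    have h1 : LieAlgebra.derivedSeries K L 1 = ⁅(⊤ : LieIdeal K L), (⊤ : LieIdeal K L)⁆ := by
      simp [LieAlgebra.derivedSeries_def, LieAlgebra.derivedSeriesOfIdeal_succ,
        LieAlgebra.derivedSeriesOfIdeal_zero]
    rw [hDdef, h1, LieSubmodule.lieIdeal_oper_eq_linear_span]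
    congr 1
    ext m
    constructor
    · rintro ⟨⟨a, -⟩, ⟨b, -⟩, rfl⟩; exact ⟨a, b, rfl⟩
    · rintro ⟨a, b, rfl⟩; exact ⟨⟨a, trivial⟩, ⟨b, trivial⟩, rfl⟩
  have hZcent : ∀ z ∈ Z, ∀ w : L, ⁅w, z⁆ = 0 := by
    intro z hz w
    rw [hZdef, LieSubmodule.mem_toSubmodule] at hz
    exact hz w
  have hrefl : B.IsRefl := fun x y h => by rw [hsymm]; exact h
  -- the orthogonal complement of the derived submodule is the center
  have horth : B.orthogonal D = Z := by
    ext m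
    rw [LinearMap.BilinForm.mem_orthogonal_iff]
    constructor
    · intro hm
      rw [hZdef, LieSubmodule.mem_toSubmodule]
      intro x
      apply hB.1 ⁅x, m⁆
      intro n
      have h1 : B ⁅x, m⁆ n = B n ⁅x, m⁆ := hsymm _ _
      rw [h1, ← hinv n x m]
      exact hm ⁅n, x⁆ (hDspan ▸ Submodule.subset_span ⟨n, x, rfl⟩)
    · intro hm n hn
      rw [hDspan] at hn
      induction hn using Submodule.span_induction with
      | mem w hw =>
        obtain ⟨a, b, rfl⟩ := hw
        show B ⁅a, b⁆ m = 0
        rw [hinv a b m, hZcent m hm b, map_zero]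
      | zero => show B 0 m = 0; rw [map_zero, LinearMap.zero_apply]
      | add x y _ _ hx hy =>
        show B (x + y) m = 0
        rw [map_add, LinearMap.add_apply, show B x m = 0 from hx, show B y m = 0 from hy, add_zero]
      | smul t x _ hx =>
        show B (t • x) m = 0
        rw [map_smul, LinearMap.smul_apply, show B x m = 0 from hx, smul_zero]
  -- dimension bookkeeping
  have hfin : finrank K (B.orthogonal D) = finrank K L - finrank K D :=
    LinearMap.BilinForm.finrank_orthogonal hB D
  rw [horth] at hfin
  have hDle : finrank K D ≤ finrank K L := Submodule.finrank_le D
  have hsum : finrank K D + finrank K Z = finrank K L := by omega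
  have hquot : finrank K (L ⧸ Z) + finrank K Z = finrank K L :=
    Submodule.finrank_quotient_add_finrank Z
  have hQD : finrank K (L ⧸ Z) = finrank K D := by omega
  -- solvability: the derived submodule is proper
  have hDlt : D < ⊤ := by
    have h1 : LieAlgebra.derivedSeries K L 1 < ⊤ :=
      LieAlgebra.derivedSeries_lt_top_of_solvable (R := K) (L := L)
    rw [lt_top_iff_ne_top] at h1 ⊢
    intro hc
    apply h1
    apply (LieSubmodule.toSubmodule_inj _ _).mp
    rw [LieSubmodule.top_toSubmodule, ← hc, hDdef]
  have hpos : 0 < finrank K L := Module.finrank_pos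
  have hDfin : finrank K D < finrank K L := Submodule.finrank_lt hDlt.ne
  -- first reduction: quotient dimension ≤ 2, so the derived submodule is at most a line
  have hD2 : finrank K D ≤ 2 := by omega
  obtain ⟨v, hv⟩ := aux_bracket_span Z hZcent (by omega)
  have hDv : D ≤ Submodule.span K {v} := by
    rw [hDspan]
    apply Submodule.span_le.mpr
    rintro m ⟨a, b, rfl⟩
    exact hv a b
  have hspanv : finrank K (Submodule.span K ({v} : Set L)) ≤ 1 := by
    rcases eq_or_ne v 0 with rfl | hv0
    · rw [Submodule.span_zero_singleton]
      simp
    · rw [finrank_span_singleton hv0]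
  have hD1 : finrank K D ≤ 1 := (Submodule.finrank_mono hDv).trans hspanv
  -- second reduction: quotient dimension ≤ 1, so the algebra is abelian
  exact ⟨aux_bracket_zero Z hZcent (by omega)⟩
end
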